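/- Let n ≥ 2 be a natural number, let α ≥ 7 be a real number, and let t be a natural number with t ≥ 4·n·log n. If X is a binomial random variable with t trials and success probability 2/n, then Pr[X > α·t/n] ≤ n^(−4). -/

import Mathlib

open scoped ENNReal


open Nat Finset in
lemma pow_self_le_factorial_mul_exp (m : ℕ) : (m : ℝ) ^ m ≤ (m ! : ℝ) * Real.exp m := by
  have h := Real.sum_le_exp_of_nonneg (x := (m : ℝ)) (by positivity) (m + 1)
  have h2 : (m : ℝ) ^ m / m ! ≤ ∑ i ∈ range (m + 1), (m : ℝ) ^ i / i ! := by
    refine Finset.single_le_sum (f := fun i => (m : ℝ) ^ i / i !) ?_ (self_mem_range_succ m)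
    intro i _; positivity
  have hfac : (0 : ℝ) < m ! := by exact_mod_cast Nat.factorial_pos m
  rw [div_le_iff₀ hfac] at *
  calc (m : ℝ) ^ m ≤ (∑ i ∈ range (m + 1), (m : ℝ) ^ i / i !) * m ! := by
        rw [← div_le_iff₀ hfac] at h2 ⊢; exact h2
    _ ≤ Real.exp m * m ! := by
        exact mul_le_mul_of_nonneg_right h hfac.le
    _ = (m ! : ℝ) * Real.exp m := mul_comm _ _

open Nat in
lemma term_le (t k m : ℕ) (p : ℝ) (hp : 0 ≤ p) (hm : 1 ≤ m) (hmk : m ≤ k) :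
    (t.choose k : ℝ) * p ^ k ≤ Real.exp m * ((t * p) / m) ^ k := by
  have hm0 : (0 : ℝ) < m := by exact_mod_cast hm
  have hfacm : (0 : ℝ) < m ! := by exact_mod_cast Nat.factorial_pos m
  have h1 : (t.choose k : ℝ) ≤ (t : ℝ) ^ k / k ! := by
    exact_mod_cast Nat.choose_le_pow_div k t
  have h2 : (m ! : ℝ) * (m : ℝ) ^ (k - m) ≤ (k ! : ℝ) := by
    have := Nat.factorial_mul_pow_le_factorial (m := m) (n := k - m)
    rw [Nat.add_sub_cancel' hmk] at this
    calc (m ! : ℝ) * (m : ℝ) ^ (k - m) ≤ (m ! : ℝ) * ((m : ℝ) + 1) ^ (k - m) := by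
          apply mul_le_mul_of_nonneg_left _ hfacm.le
          exact pow_le_pow_left₀ hm0.le (by linarith) _
      _ ≤ (k ! : ℝ) := by exact_mod_cast this
  have hden : (0 : ℝ) < (m ! : ℝ) * (m : ℝ) ^ (k - m) := by positivity
  have hkfac : (0 : ℝ) < k ! := by exact_mod_cast Nat.factorial_pos k
  have hstep1 : (t.choose k : ℝ) * p ^ k ≤ ((t : ℝ) * p) ^ k / k ! := by
    calc (t.choose k : ℝ) * p ^ k ≤ ((t:ℝ) ^ k / k !) * p ^ k :=
          mul_le_mul_of_nonneg_right h1 (by positivity)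
      _ = ((t : ℝ) * p) ^ k / k ! := by rw [mul_pow]; ring
  have hstep2 : ((t : ℝ) * p) ^ k / k ! ≤ ((t : ℝ) * p) ^ k / ((m ! : ℝ) * (m : ℝ) ^ (k - m)) :=
    div_le_div_of_nonneg_left (by positivity) hden h2
  have hstep3 : ((t : ℝ) * p) ^ k / ((m ! : ℝ) * (m : ℝ) ^ (k - m)) =
      ((m : ℝ) ^ m / m !) * ((t * p) / m) ^ k := by
    have hmk' : (m : ℝ) ^ (k - m) * (m : ℝ) ^ m = (m : ℝ) ^ k := by
      rw [← pow_add, Nat.sub_add_cancel hmk]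
    field_simp
    rw [hmk', div_pow, mul_div_assoc', mul_div_cancel_left₀ _ (pow_ne_zero k hm0.ne')]
  have hstep4 : ((m : ℝ) ^ m / m !) * ((t * p) / m) ^ k ≤ Real.exp m * ((t * p) / m) ^ k := by
    apply mul_le_mul_of_nonneg_right _ (by positivity)
    rw [div_le_iff₀ hfacm]
    calc (m:ℝ)^m ≤ (m ! : ℝ) * Real.exp m := pow_self_le_factorial_mul_exp m
      _ = Real.exp m * m ! := mul_comm _ _
  calc (t.choose k : ℝ) * p ^ k ≤ ((t : ℝ) * p) ^ k / k ! := hstep1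
    _ ≤ _ := hstep2
    _ = _ := hstep3
    _ ≤ _ := hstep4


open Finset in
lemma geo_tail_sum (m n : ℕ) :
    ∑ k ∈ Finset.range n, (if m ≤ k then (2/7:ℝ)^k else 0) ≤ (2/7:ℝ)^m * (7/5) := by
  have h1 : ∑ k ∈ range n, (if m ≤ k then (2/7:ℝ)^k else 0)
      = ∑ k ∈ (range n).filter (fun k => m ≤ k), (2/7:ℝ)^k := (Finset.sum_filter _ _).symm
  have hfil : (range n).filter (fun k => m ≤ k) = Finset.Ico m n := by
    ext k; simp only [mem_filter, mem_range, Finset.mem_Ico]; omega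
  rw [h1, hfil]
  by_cases h : m ≤ n
  · rw [geom_sum_Ico (by norm_num : (2/7:ℝ) ≠ 1) h]
    rw [div_le_iff_of_neg (by norm_num : (2/7:ℝ) - 1 < 0)]
    have hp : (0:ℝ) ≤ (2/7:ℝ)^n := by positivity
    nlinarith
  · rw [Finset.Ico_eq_empty (by omega)]
    simp only [Finset.sum_empty]
    positivity


lemma log_ratio_le : Real.log (2 / 7 * Real.exp 1) ≤ -(1/5 : ℝ) := by
  have h0 : (0:ℝ) < 2 / 7 * Real.exp 1 := by positivity
  rw [Real.log_le_iff_le_exp h0]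
  have key : Real.exp (6/5 : ℝ) ≤ 7/2 := by
    have h5 : Real.exp (6/5 : ℝ) ^ 5 = Real.exp 6 := by
      rw [← Real.exp_nat_mul]; norm_num
    have h6 : Real.exp (6:ℝ) ≤ (7/2:ℝ)^5 := by
      have : Real.exp (6:ℝ) = Real.exp 1 ^ 6 := by
        rw [← Real.exp_nat_mul]; norm_num
      rw [this]
      have he := Real.exp_one_lt_d9
      calc Real.exp 1 ^ 6 ≤ (2.7182818286 : ℝ) ^ 6 :=
            pow_le_pow_left₀ (Real.exp_pos 1).le he.le 6
        _ ≤ (7/2:ℝ)^5 := by norm_num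
    refine le_of_pow_le_pow_left₀ (n := 5) (by norm_num) (by norm_num) ?_
    rw [h5]; exact h6
  have : Real.exp (-(1/5:ℝ)) = Real.exp 1 / Real.exp (6/5) := by
    rw [← Real.exp_sub]; norm_num
  rw [this, le_div_iff₀ (Real.exp_pos _)]
  calc 2 / 7 * Real.exp 1 * Real.exp (6/5) ≤ 2/7 * Real.exp 1 * (7/2) := by
        apply mul_le_mul_of_nonneg_left key (by positivity)
    _ = Real.exp 1 := by ring

lemma final_numeric (N : ℝ) (m : ℕ) (hN : 2 ≤ N) (hm : 28 * Real.log N ≤ m) :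
    Real.exp m * ((2/7 : ℝ) ^ m * (7/5)) ≤ (N ^ 4)⁻¹ := by
  have hN0 : (0:ℝ) < N := by linarith
  have hlogN : (0.6931471803 : ℝ) < Real.log N :=
    lt_of_lt_of_le Real.log_two_gt_d9 (Real.log_le_log (by norm_num) hN)
  set r : ℝ := 2 / 7 * Real.exp 1 with hr
  have hr0 : 0 < r := by positivity
  have h1 : Real.exp m * ((2/7 : ℝ) ^ m * (7/5)) = 7/5 * r ^ m := by
    rw [hr, mul_pow, ← Real.exp_one_pow]; ring
  rw [h1]
  have h2 : r ^ m = Real.exp (m * Real.log r) := by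
    rw [Real.exp_nat_mul, Real.exp_log hr0]
  have h3 : (N ^ 4)⁻¹ = Real.exp (-(4 * Real.log N)) := by
    rw [Real.exp_neg]
    congr 1
    rw [show (4:ℝ) * Real.log N = ((4:ℕ):ℝ) * Real.log N by norm_num, ← Real.log_pow,
      Real.exp_log (by positivity)]
  have h4 : (7/5 : ℝ) = Real.exp (Real.log (7/5)) := (Real.exp_log (by norm_num)).symm
  rw [h2, h3, h4, ← Real.exp_add, Real.exp_le_exp]
  have h5 : Real.log (7/5 : ℝ) ≤ 2/5 := by
    have := Real.log_le_sub_one_of_pos (x := (7/5:ℝ)) (by norm_num)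
    linarith
  have h6 : (m : ℝ) * Real.log r ≤ (m : ℝ) * (-(1/5)) :=
    mul_le_mul_of_nonneg_left log_ratio_le (by positivity)
  have h7 : (m : ℝ) * (-(1/5)) ≤ (28 * Real.log N) * (-(1/5)) := by nlinarith
  nlinarith


open Finset in
lemma real_tail (n t : ℕ) (α : ℝ) (hn : 2 ≤ n) (hα : 7 ≤ α)
    (ht : 4 * (n:ℝ) * Real.log n ≤ t) :
    ∑ k ∈ Finset.range (t+1),
      (if ⌊α * t / (n:ℝ)⌋₊ + 1 ≤ k then (t.choose k : ℝ) * (2/(n:ℝ))^k else 0)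
    ≤ ((n:ℝ)^4)⁻¹ := by
  have hN : (2:ℝ) ≤ (n:ℝ) := by exact_mod_cast hn
  have hN0 : (0:ℝ) < n := by linarith
  set m : ℕ := ⌊α * t / (n:ℝ)⌋₊ + 1 with hmdef
  have hm1 : α * t / (n:ℝ) < (m:ℝ) := by
    have := Nat.lt_floor_add_one (α * t / (n:ℝ))
    push_cast [hmdef]
    exact_mod_cast this
  have hmpos : 1 ≤ m := Nat.le_add_left 1 _
  have ht0 : (0:ℝ) ≤ (t:ℝ) := Nat.cast_nonneg t
  have h7 : 7 * t / (n:ℝ) ≤ α * t / (n:ℝ) := by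
    gcongr
  have hlog : 28 * Real.log n ≤ 7 * t / (n:ℝ) := by
    rw [le_div_iff₀ hN0]
    nlinarith [ht]
  have hmlog : 28 * Real.log n ≤ (m:ℝ) := by linarith
  have hmR : (0:ℝ) < (m:ℝ) := by exact_mod_cast hmpos
  have hratio : (t:ℝ) * (2/(n:ℝ)) / m ≤ 2/7 := by
    rw [div_le_iff₀ hmR]
    have h2 : 7 * (t:ℝ) / n ≤ (m:ℝ) := le_of_lt (lt_of_le_of_lt h7 hm1)
    rw [div_le_iff₀ hN0] at h2
    have hinv : (0:ℝ) < ((n:ℝ))⁻¹ := by positivity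
    rw [div_eq_mul_inv]
    have hnn : (n:ℝ) * ((n:ℝ))⁻¹ = 1 := mul_inv_cancel₀ hN0.ne'
    nlinarith [mul_le_mul_of_nonneg_right h2 hinv.le, hnn]
  have hratio0 : (0:ℝ) ≤ (t:ℝ) * (2/(n:ℝ)) / m := by positivity
  calc ∑ k ∈ Finset.range (t+1),
        (if m ≤ k then (t.choose k : ℝ) * (2/(n:ℝ))^k else 0)
      ≤ ∑ k ∈ Finset.range (t+1), (if m ≤ k then Real.exp m * (2/7:ℝ)^k else 0) := by
        apply Finset.sum_le_sum
        intro k _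
        by_cases hk : m ≤ k
        · rw [if_pos hk, if_pos hk]
          calc (t.choose k : ℝ) * (2/(n:ℝ))^k
              ≤ Real.exp m * (((t:ℝ) * (2/(n:ℝ))) / m)^k :=
                term_le t k m (2/(n:ℝ)) (by positivity) hmpos hk
            _ ≤ Real.exp m * (2/7:ℝ)^k := by
                apply mul_le_mul_of_nonneg_left _ (Real.exp_pos _).le
                exact pow_le_pow_left₀ hratio0 hratio k
        · rw [if_neg hk, if_neg hk]
    _ = Real.exp m * ∑ k ∈ Finset.range (t+1), (if m ≤ k then (2/7:ℝ)^k else 0) := by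
        rw [Finset.mul_sum]
        apply Finset.sum_congr rfl
        intro k _
        rw [mul_ite, mul_zero]
    _ ≤ Real.exp m * ((2/7:ℝ)^m * (7/5)) := by
        apply mul_le_mul_of_nonneg_left (geo_tail_sum m (t+1)) (Real.exp_pos _).le
    _ ≤ (((n:ℝ))^4)⁻¹ := final_numeric (n:ℝ) m hN hmlog


/-- Upper tail: if `X ~ Bin(t, 2/n)` with `n ≥ 2`, `α ≥ 7`, `t ≥ 4·n·log n`, then
`Pr[X > α·t/n] ≤ n⁻⁴`. -/
theorem binomial_upper_tail (n t : ℕ) (α : ℝ) (hn : 2 ≤ n) (hα : 7 ≤ α)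
    (ht : 4 * (n : ℝ) * Real.log n ≤ t)
    (hp : (2 : ℝ≥0∞) / n ≤ 1) :
    (PMF.binomial (2 / n) (div_le_one_of_le₀ (by exact_mod_cast hn) (by positivity)) t).toMeasure {k : Fin (t + 1) | α * t / n < (k : ℝ)} ≤
      ((n : ℝ≥0∞) ^ 4)⁻¹ := by
  have hN : (2:ℝ) ≤ (n:ℝ) := by exact_mod_cast hn
  have hN0 : (0:ℝ) < (n:ℝ) := by linarith
  have ht0 : (0:ℝ) ≤ (t:ℝ) := Nat.cast_nonneg t
  have hα0 : (0:ℝ) ≤ α * t / n := div_nonneg (mul_nonneg (by linarith) ht0) hN0.le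
  set m : ℕ := ⌊α * t / (n:ℝ)⌋₊ + 1 with hmdef
  have hmeas : MeasurableSet {k : Fin (t + 1) | α * t / n < (k : ℝ)} := trivial
  rw [PMF.toMeasure_apply _ hmeas, tsum_fintype]
  have hpr : ((2:ℝ≥0∞)/n) = ENNReal.ofReal (2/(n:ℝ)) := by
    rw [ENNReal.ofReal_div_of_pos hN0, ENNReal.ofReal_ofNat, ENNReal.ofReal_natCast]
  calc ∑ k : Fin (t+1),
        {k : Fin (t + 1) | α * t / n < (k : ℝ)}.indicator (⇑(PMF.binomial (2/n) _ t)) k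
      ≤ ∑ k : Fin (t+1),
        ENNReal.ofReal (if m ≤ (k:ℕ) then (t.choose (k:ℕ) : ℝ) * (2/(n:ℝ))^(k:ℕ) else 0) := by
        apply Finset.sum_le_sum
        intro k _
        rw [Set.indicator_apply]
        by_cases hk : α * t / n < (k : ℝ)
        · rw [if_pos (show k ∈ {k : Fin (t+1) | α * t / n < (k : ℝ)} from hk)]
          have hcond : m ≤ (k:ℕ) := by
            have hfl : ⌊α * t / (n:ℝ)⌋₊ < (k:ℕ) := by
              rw [Nat.floor_lt hα0]
              exact_mod_cast hk
            omega
          rw [if_pos hcond]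
          have hrhs : ENNReal.ofReal ((t.choose (k:ℕ) : ℝ) * (2/(n:ℝ))^(k:ℕ))
              = (((t.choose (k:ℕ) : NNReal) * ((2:NNReal)/n)^(k:ℕ) : NNReal) : ℝ≥0∞) := by
            rw [← ENNReal.ofReal_coe_nnreal]; push_cast; rfl
          rw [hrhs, PMF.binomial_apply]; norm_cast
          calc (2/n : NNReal)^(k:ℕ) * (1 - 2/n)^(((Fin.last t : Fin (t+1)) : ℕ) - (k:ℕ))
                * (t.choose (k:ℕ) : ℕ)
              ≤ (2/n : NNReal)^(k:ℕ) * 1 * (t.choose (k:ℕ) : ℕ) := by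
                gcongr
                exact pow_le_one' tsub_le_self _
            _ = (t.choose (k:ℕ) : NNReal) * ((2:NNReal)/n)^(k:ℕ) := by
                ring
        · rw [if_neg (show k ∉ {k : Fin (t+1) | α * t / n < (k : ℝ)} from hk)]
          exact zero_le
    _ = ENNReal.ofReal (∑ k : Fin (t+1),
          (if m ≤ (k:ℕ) then (t.choose (k:ℕ) : ℝ) * (2/(n:ℝ))^(k:ℕ) else 0)) := by
        rw [ENNReal.ofReal_sum_of_nonneg]
        intro k _
        by_cases hk : m ≤ (k:ℕ)
        · rw [if_pos hk]; positivity
        · rw [if_neg hk]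
    _ = ENNReal.ofReal (∑ k ∈ Finset.range (t+1),
          (if m ≤ k then (t.choose k : ℝ) * (2/(n:ℝ))^k else 0)) := by
        congr 1
        exact Fin.sum_univ_eq_sum_range
          (fun k => if m ≤ k then ((t.choose k : ℝ)) * (2/(n:ℝ))^k else 0) (t+1)
    _ ≤ ENNReal.ofReal (((n:ℝ))^4)⁻¹ :=
        ENNReal.ofReal_le_ofReal (real_tail n t α hn hα ht)
    _ = ((n : ℝ≥0∞) ^ 4)⁻¹ := by
        rw [ENNReal.ofReal_inv_of_pos (by positivity), ENNReal.ofReal_pow hN0.le,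
          ENNReal.ofReal_natCast]
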